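/- Let k ≥ 2 be an integer and p > 1. A function f : [p,∞) → (0,∞) satisfies f(x) = (x/k)·f(x^k) for all x ≥ p if and only if for every n ∈ ℕ (including 0) and every x ∈ [p^(k^n), p^(k^(n+1))) one has f(x) = k^n · x^((k^(-n)-1)/(k-1)) · f₀(x^(k^(-n))), where f₀ is the restriction of f to [p, p^k). -/

import Mathlib

open Real Set

theorem stmt_4 (k : ℕ) (hk : 2 ≤ k) (p : ℝ) (hp : 1 < p)
    (f : ℝ → ℝ) (hfpos : ∀ x ≥ p, 0 < f x) :
    (∀ x ≥ p, f x = x / k * f (x ^ k)) ↔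
      ∀ n : ℕ, ∀ x : ℝ, p ^ (k ^ n) ≤ x → x < p ^ (k ^ (n + 1)) →
        f x = (k : ℝ) ^ n * x ^ (((k : ℝ) ^ (-(n : ℤ)) - 1) / ((k : ℝ) - 1)) *
          f (x ^ ((k : ℝ) ^ (-(n : ℤ)))) := by
  have hkN : 1 < k := lt_of_lt_of_le one_lt_two hk
  have hkR : (1:ℝ) < (k:ℝ) := by exact_mod_cast hkN
  have hk0 : (0:ℝ) < (k:ℝ) := lt_trans one_pos hkR
  have hkne : (k:ℝ) ≠ 0 := ne_of_gt hk0
  have hk1ne : (k:ℝ) - 1 ≠ 0 := sub_ne_zero.mpr (ne_of_gt hkR)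
  -- powers of p are > 1
  have hppow : ∀ n : ℕ, 1 < p ^ (k ^ n) := fun n =>
    one_lt_pow₀ hp (pow_ne_zero n ((by omega : 0 < k)).ne')
  -- exponent identity
  have hexp : ∀ n : ℕ,
      (k:ℝ)⁻¹ * (((k:ℝ) ^ (-(n:ℤ)) - 1) / ((k:ℝ) - 1) - 1)
        = ((k:ℝ) ^ (-((n:ℕ)+1:ℕ):ℤ) - 1) / ((k:ℝ) - 1) := by
    intro n
    have h1 : ((k:ℝ) ^ (-((n:ℕ)+1:ℕ):ℤ)) = (k:ℝ) ^ (-(n:ℤ)) / (k:ℝ) := by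
      push_cast
      rw [neg_add, zpow_add₀ hkne, zpow_neg_one]
      ring
    rw [h1]
    field_simp
    ring
  -- p ≤ p ^ (k ^ n)
  have hple : ∀ n : ℕ, p ≤ p ^ (k ^ n) := fun n => by
    calc p = p ^ 1 := (pow_one p).symm
    _ ≤ p ^ (k ^ n) := pow_le_pow_right₀ hp.le (Nat.one_le_pow _ _ ((by omega : 0 < k)))
  constructor
  · intro hf n
    induction n with
    | zero =>
      intro x hx1 hx2
      norm_num
    | succ n ih =>
      intro x hx1 hx2
      have hx0 : (0:ℝ) < x := lt_of_lt_of_le (lt_trans one_pos (hppow _)) hx1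
      set y : ℝ := x ^ ((k:ℝ)⁻¹) with hy
      have hy0 : 0 < y := rpow_pos_of_pos hx0 _
      have hyk : y ^ k = x := by
        rw [hy]
        exact Real.rpow_inv_natCast_pow hx0.le ((by omega : 0 < k)).ne'
      -- bounds on y
      have hb1 : p ^ (k ^ n) ≤ y := by
        have h1 : (p ^ (k ^ n)) ^ (k:ℝ) ≤ x := by
          rw [rpow_natCast, ← pow_mul, ← pow_succ]
          exact hx1
        have := rpow_le_rpow (by positivity) h1 (by positivity : (0:ℝ) ≤ (k:ℝ)⁻¹)
        rwa [← rpow_mul (by positivity), mul_inv_cancel₀ hkne, rpow_one] at this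
      have hb2 : y < p ^ (k ^ (n+1)) := by
        have h1 : x < (p ^ (k ^ (n+1))) ^ (k:ℝ) := by
          rw [rpow_natCast, ← pow_mul, ← pow_succ]
          exact hx2
        have := rpow_lt_rpow hx0.le h1 (by positivity : (0:ℝ) < (k:ℝ)⁻¹)
        rwa [← rpow_mul (by positivity), mul_inv_cancel₀ hkne, rpow_one] at this
      have hyp : p ≤ y := le_trans (hple n) hb1
      have hfy := hf y hyp
      rw [hyk] at hfy
      have ihy := ih y hb1 hb2
      -- rewrite f x in terms of f y
      have hfx : f x = (k:ℝ) * y⁻¹ * f y := by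
        rw [hfy]; field_simp
      have harg : y ^ ((k:ℝ) ^ (-(n:ℤ))) = x ^ ((k:ℝ) ^ (-((n+1:ℕ)):ℤ)) := by
        rw [hy, ← rpow_mul hx0.le]
        congr 1
        push_cast
        rw [neg_add, zpow_add₀ hkne, zpow_neg_one]
        ring
      rw [hfx, ihy, harg]
      have hpowy : y ^ (((k:ℝ) ^ (-(n:ℤ)) - 1) / ((k:ℝ) - 1)) * y⁻¹
          = x ^ (((k:ℝ) ^ (-((n+1:ℕ)):ℤ) - 1) / ((k:ℝ) - 1)) := by
        rw [← rpow_neg_one y, ← rpow_add hy0, hy, ← rpow_mul hx0.le, ← hexp n]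
        congr 1
      rw [← hpowy]
      ring
  · intro h x hx
    -- find n with p^(k^n) ≤ x < p^(k^(n+1))
    have hx1 : 1 < x := lt_of_lt_of_le hp hx
    have hex : ∃ n : ℕ, x < p ^ (k ^ (n+1)) := by
      obtain ⟨N, hN⟩ := pow_unbounded_of_one_lt x hp
      refine ⟨N, lt_of_lt_of_le hN ?_⟩
      exact pow_le_pow_right₀ hp.le (le_trans (Nat.lt_pow_self (n := N) hkN).le
        (Nat.pow_le_pow_right ((by omega : 0 < k)) (Nat.le_succ N)))
    classical
    let n := Nat.find hex
    have hn2 : x < p ^ (k ^ (n+1)) := Nat.find_spec hex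
    have hn1 : p ^ (k ^ n) ≤ x := by
      rcases Nat.eq_zero_or_pos n with h0 | hpos
      · rw [h0]; simpa using hx
      · obtain ⟨m, hm⟩ := Nat.exists_eq_succ_of_ne_zero hpos.ne'
        have := Nat.find_min hex (m := m) (by omega)
        rw [hm]
        exact le_of_not_gt this
    have hx0 : (0:ℝ) < x := lt_trans one_pos hx1
    have hxk1 : p ^ (k ^ (n+1)) ≤ x ^ k := by
      calc p ^ (k ^ (n+1)) = (p ^ (k ^ n)) ^ k := by rw [← pow_mul, ← pow_succ]
      _ ≤ x ^ k := pow_le_pow_left₀ (by positivity) hn1 k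
    have hxk2 : x ^ k < p ^ (k ^ (n+2)) := by
      calc x ^ k < (p ^ (k ^ (n+1))) ^ k :=
        pow_lt_pow_left₀ hn2 hx0.le ((by omega : 0 < k)).ne'
      _ = p ^ (k ^ (n+2)) := by rw [← pow_mul, ← pow_succ]
    have e1 := h n x hn1 hn2
    have e2 := h (n+1) (x ^ k) hxk1 hxk2
    have harg : (x ^ k) ^ ((k:ℝ) ^ (-((n+1:ℕ)):ℤ)) = x ^ ((k:ℝ) ^ (-(n:ℤ))) := by
      rw [← rpow_natCast x k, ← rpow_mul hx0.le]
      congr 1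
      push_cast
      rw [neg_add, zpow_add₀ hkne, zpow_neg_one]
      field_simp
    rw [harg] at e2
    have hxpow : (x ^ k : ℝ) ^ (((k:ℝ) ^ (-((n+1:ℕ)):ℤ) - 1) / ((k:ℝ) - 1))
        = x ^ ((k:ℝ) * (((k:ℝ) ^ (-((n+1:ℕ)):ℤ) - 1) / ((k:ℝ) - 1))) := by
      rw [← rpow_natCast x k, ← rpow_mul hx0.le]
    rw [hxpow] at e2
    have hexp2 : (k:ℝ) * (((k:ℝ) ^ (-((n+1:ℕ)):ℤ) - 1) / ((k:ℝ) - 1))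
        = ((k:ℝ) ^ (-(n:ℤ)) - 1) / ((k:ℝ) - 1) - 1 := by
      have h1 : ((k:ℝ) ^ (-((n:ℕ)+1:ℕ):ℤ)) = (k:ℝ) ^ (-(n:ℤ)) / (k:ℝ) := by
        push_cast
        rw [neg_add, zpow_add₀ hkne, zpow_neg_one]
        ring
      rw [h1]
      field_simp
      ring
    rw [hexp2, sub_eq_add_neg, rpow_add hx0, rpow_neg_one] at e2
    rw [e1, e2]
    field_simp
    ring
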